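/- arXiv:2412.20526 — 9 statements merged into one kernel-verified Lean document; each statement's English description precedes it below -/
import Mathlib

section
/- Let (X,d) and (Y,ρ) be semimetric spaces, and let Φ : ℝ≥0 × ℝ≥0 → ℝ≥0 be symmetric, monotone increasing in both arguments, with Φ(0,0)=0, a ≤ Φ(0,a) for all a > 0, and kΦ(u,v) = Φ(ku,kv) for all k > 0. Suppose Φ is a multiplicative quadruple function for (X,d), i.e., d(x,z)d(t,y) ≤ Φ(d(x,y)d(t,z), d(x,t)d(y,z)) for all x,y,z,t ∈ X. Let f : X → Y be a bijective η-quasisymmetric mapping. If for all t₁,t₂,t₃,t₄ > 0, t₁t₂t₃t₄ ≤ Φ(t₁t₂, t₃t₄) implies η(t₁)η(t₂)η(t₃)η(t₄) ≤ Φ(η(t₁)η(t₂), η(t₃)η(t₄)), then Φ is a multiplicative quadruple function for (Y,ρ). -/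
open NNReal

theorem quasisymmetric_preserves_mult_quadruple
    {X Y : Type*} (d : X → X → ℝ≥0) (ρ : Y → Y → ℝ≥0)
    (hd0 : ∀ x y, d x y = 0 ↔ x = y) (hds : ∀ x y, d x y = d y x)
    (hρ0 : ∀ x y, ρ x y = 0 ↔ x = y) (hρs : ∀ x y, ρ x y = ρ y x)
    (Φ : ℝ≥0 → ℝ≥0 → ℝ≥0)
    (hΦsymm : ∀ u v, Φ u v = Φ v u)
    (hΦmono : ∀ u₁ u₂ v₁ v₂, u₁ ≤ u₂ → v₁ ≤ v₂ → Φ u₁ v₁ ≤ Φ u₂ v₂)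
    (hΦ00 : Φ 0 0 = 0)
    (ha : ∀ a : ℝ≥0, 0 < a → a ≤ Φ 0 a)
    (hΦhom : ∀ k u v : ℝ≥0, 0 < k → k * Φ u v = Φ (k * u) (k * v))
    (hX : ∀ x y z t : X, d x z * d t y ≤ Φ (d x y * d t z) (d x t * d y z))
    (f : X → Y) (hf : Function.Bijective f)
    (η : ℝ≥0 → ℝ≥0) (hη : IsHomeomorph η)
    (hqs : ∀ (a b x : X) (t : ℝ≥0), 0 < t →
      d x a ≤ t * d x b → ρ (f x) (f a) ≤ η t * ρ (f x) (f b))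
    (himp : ∀ t₁ t₂ t₃ t₄ : ℝ≥0, 0 < t₁ → 0 < t₂ → 0 < t₃ → 0 < t₄ →
      t₁ * t₂ * t₃ * t₄ ≤ Φ (t₁ * t₂) (t₃ * t₄) →
      η t₁ * η t₂ * η t₃ * η t₄ ≤ Φ (η t₁ * η t₂) (η t₃ * η t₄)) :
    ∀ x y z t : Y, ρ x z * ρ t y ≤ Φ (ρ x y * ρ t z) (ρ x t * ρ y z) := by
  intro x y z t
  obtain ⟨a, rfl⟩ := hf.2 x
  obtain ⟨b, rfl⟩ := hf.2 y
  obtain ⟨c, rfl⟩ := hf.2 z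
  obtain ⟨e, rfl⟩ := hf.2 t
  rcases eq_or_ne (ρ (f a) (f c) * ρ (f e) (f b)) 0 with h0 | h0
  · rw [h0]; exact zero_le
  have hP : 0 < ρ (f a) (f c) * ρ (f e) (f b) := pos_iff_ne_zero.mpr h0
  have hac : ρ (f a) (f c) ≠ 0 := fun h => h0 (by rw [h, zero_mul])
  have heb : ρ (f e) (f b) ≠ 0 := fun h => h0 (by rw [h, mul_zero])
  -- degenerate cases
  by_cases hab : ρ (f a) (f b) = 0
  · have hfe : f a = f b := (hρ0 _ _).mp hab
    have hEq : ρ (f a) (f c) * ρ (f e) (f b) = ρ (f a) (f e) * ρ (f b) (f c) := by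
      rw [hfe, hρs (f e) (f b), mul_comm]
    rw [hab, zero_mul, hEq]
    exact ha _ (hEq ▸ hP)
  by_cases hec : ρ (f e) (f c) = 0
  · have hfe : f e = f c := (hρ0 _ _).mp hec
    have hEq : ρ (f a) (f c) * ρ (f e) (f b) = ρ (f a) (f e) * ρ (f b) (f c) := by
      rw [hfe, hρs (f c) (f b)]
    rw [hec, mul_zero, hEq]
    exact ha _ (hEq ▸ hP)
  by_cases hae : ρ (f a) (f e) = 0
  · have hfe : f a = f e := (hρ0 _ _).mp hae
    have hEq : ρ (f a) (f c) * ρ (f e) (f b) = ρ (f a) (f b) * ρ (f e) (f c) := by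
      rw [hfe, hρs (f e) (f b), mul_comm]
    rw [hae, zero_mul, hΦsymm, hEq]
    exact ha _ (hEq ▸ hP)
  by_cases hbc : ρ (f b) (f c) = 0
  · have hfe : f b = f c := (hρ0 _ _).mp hbc
    have hEq : ρ (f a) (f c) * ρ (f e) (f b) = ρ (f a) (f b) * ρ (f e) (f c) := by
      rw [hfe]
    rw [hbc, mul_zero, hΦsymm, hEq]
    exact ha _ (hEq ▸ hP)
  -- main case: all six distances positive
  have key : ∀ p q : X, ρ (f p) (f q) ≠ 0 → 0 < d p q := by
    intro p q h
    rw [pos_iff_ne_zero]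
    intro hd
    exact h ((hρ0 _ _).mpr (congrArg f ((hd0 p q).mp hd)))
  have dab := key a b hab
  have dec := key e c hec
  have dae := key a e hae
  have dbc := key b c hbc
  have dac := key a c hac
  have deb := key e b heb
  set s₁ := d a c / d a b with hs₁
  set s₂ := d e b / d e c with hs₂
  set s₃ := d a c / d a e with hs₃
  set s₄ := d b e / d b c with hs₄
  have hs₁p : 0 < s₁ := div_pos dac dab
  have hs₂p : 0 < s₂ := div_pos deb dec
  have hs₃p : 0 < s₃ := div_pos dac dae
  have hs₄p : 0 < s₄ := div_pos (by rw [hds]; exact deb) dbc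
  -- quasisymmetry applications
  have q₁ : ρ (f a) (f c) ≤ η s₁ * ρ (f a) (f b) :=
    hqs c b a s₁ hs₁p (le_of_eq (div_mul_cancel₀ _ dab.ne').symm)
  have q₂ : ρ (f e) (f b) ≤ η s₂ * ρ (f e) (f c) :=
    hqs b c e s₂ hs₂p (le_of_eq (div_mul_cancel₀ _ dec.ne').symm)
  have q₃ : ρ (f a) (f c) ≤ η s₃ * ρ (f a) (f e) :=
    hqs c e a s₃ hs₃p (le_of_eq (div_mul_cancel₀ _ dae.ne').symm)
  have q₄ : ρ (f b) (f e) ≤ η s₄ * ρ (f b) (f c) :=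
    hqs e c b s₄ hs₄p (le_of_eq (div_mul_cancel₀ _ dbc.ne').symm)
  -- key inequality for himp
  have hbe : d b e = d e b := hds b e
  have hcond : s₁ * s₂ * s₃ * s₄ ≤ Φ (s₁ * s₂) (s₃ * s₄) := by
    set k := (d a c * d e b) / (d a b * d e c * (d a e * d b c)) with hk
    have hkpos : 0 < k := div_pos (mul_pos dac deb)
      (mul_pos (mul_pos dab dec) (mul_pos dae dbc))
    have h12 : s₁ * s₂ = k * (d a e * d b c) := by
      rw [hs₁, hs₂, hk]
      field_simp
    have h34 : s₃ * s₄ = k * (d a b * d e c) := by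
      rw [hs₃, hs₄, hk, hbe]
      field_simp
    calc s₁ * s₂ * s₃ * s₄ = (s₁ * s₂) * (s₃ * s₄) := by ring
      _ = (k * (d a e * d b c)) * (k * (d a b * d e c)) := by rw [h12, h34]
      _ = k * (k * (d a e * d b c * (d a b * d e c))) := by ring
      _ = k * (d a c * d e b) := by
          congr 1
          rw [hk]
          field_simp
      _ ≤ k * Φ (d a b * d e c) (d a e * d b c) := mul_le_mul_right (hX a b c e) k
      _ = Φ (k * (d a b * d e c)) (k * (d a e * d b c)) := hΦhom _ _ _ hkpos
      _ = Φ (s₃ * s₄) (s₁ * s₂) := by rw [← h12, ← h34]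
      _ = Φ (s₁ * s₂) (s₃ * s₄) := hΦsymm _ _
  -- apply himp
  have hmain := himp s₁ s₂ s₃ s₄ hs₁p hs₂p hs₃p hs₄p hcond
  set P := ρ (f a) (f c) * ρ (f e) (f b) with hPdef
  set A := ρ (f a) (f b) * ρ (f e) (f c) with hA
  set B := ρ (f a) (f e) * ρ (f b) (f c) with hB
  set α := η s₁ * η s₂ with hα
  set β := η s₃ * η s₄ with hβ
  have hαβ : α * β ≤ Φ α β := by
    calc α * β = η s₁ * η s₂ * η s₃ * η s₄ := by rw [hα, hβ]; ring
      _ ≤ Φ (η s₁ * η s₂) (η s₃ * η s₄) := hmain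
  have hPA : P ≤ α * A := by
    calc P ≤ (η s₁ * ρ (f a) (f b)) * (η s₂ * ρ (f e) (f c)) := mul_le_mul' q₁ q₂
      _ = α * A := by rw [hα, hA]; ring
  have hPB : P ≤ β * B := by
    have : ρ (f e) (f b) = ρ (f b) (f e) := hρs _ _
    calc P = ρ (f a) (f c) * ρ (f b) (f e) := by rw [hPdef, this]
      _ ≤ (η s₃ * ρ (f a) (f e)) * (η s₄ * ρ (f b) (f c)) := mul_le_mul' q₃ q₄
      _ = β * B := by rw [hβ, hB]; ring
  have hαpos : 0 < α := by
    rw [pos_iff_ne_zero]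
    intro h
    rw [h, zero_mul] at hPA
    exact hP.ne' (le_antisymm hPA zero_le)
  have hβpos : 0 < β := by
    rw [pos_iff_ne_zero]
    intro h
    rw [h, zero_mul] at hPB
    exact hP.ne' (le_antisymm hPB zero_le)
  have hkpos : 0 < P / (α * β) := div_pos hP (mul_pos hαpos hβpos)
  have hAge : P / α ≤ A := (div_le_iff₀ hαpos).mpr (by rw [mul_comm]; exact hPA)
  have hBge : P / β ≤ B := (div_le_iff₀ hβpos).mpr (by rw [mul_comm]; exact hPB)
  calc P ≤ P / (α * β) * (α * β) := le_of_eq (div_mul_cancel₀ P (mul_pos hαpos hβpos).ne').symm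
    _ ≤ P / (α * β) * Φ α β := mul_le_mul_right hαβ _
    _ = P / (α * β) * Φ β α := by rw [hΦsymm]
    _ = Φ (P / (α * β) * β) (P / (α * β) * α) := hΦhom _ _ _ hkpos
    _ = Φ (P / α) (P / β) := by
        congr 1
        · field_simp
        · field_simp
    _ ≤ Φ A B := hΦmono _ _ _ _ hAge hBge
end

section
/- Let (X,d) be a Ptolemaic semimetric space, (Y,ρ) a semimetric space, and f : X → Y a bijective η-quasisymmetric mapping. If for all t₁,t₂,t₃,t₄ ≥ 0, t₁t₂t₃t₄ ≤ t₁t₂ + t₃t₄ implies η(t₁)η(t₂)η(t₃)η(t₄) ≤ η(t₁)η(t₂) + η(t₃)η(t₄), then (Y,ρ) is Ptolemaic. -/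
open NNReal

theorem quasisymmetric_preserves_ptolemaic
    {X Y : Type*} (d : X → X → ℝ≥0) (ρ : Y → Y → ℝ≥0)
    (hd0 : ∀ x y, d x y = 0 ↔ x = y) (hds : ∀ x y, d x y = d y x)
    (hρ0 : ∀ x y, ρ x y = 0 ↔ x = y) (hρs : ∀ x y, ρ x y = ρ y x)
    (hX : ∀ x y z t : X, d x z * d t y ≤ d x y * d t z + d x t * d y z)
    (f : X → Y) (hf : Function.Bijective f)
    (η : ℝ≥0 → ℝ≥0) (hη : IsHomeomorph η)
    (hqs : ∀ (a b x : X) (t : ℝ≥0), 0 < t →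
      d x a ≤ t * d x b → ρ (f x) (f a) ≤ η t * ρ (f x) (f b))
    (himp : ∀ t₁ t₂ t₃ t₄ : ℝ≥0,
      t₁ * t₂ * t₃ * t₄ ≤ t₁ * t₂ + t₃ * t₄ →
      η t₁ * η t₂ * η t₃ * η t₄ ≤ η t₁ * η t₂ + η t₃ * η t₄) :
    ∀ x y z t : Y, ρ x z * ρ t y ≤ ρ x y * ρ t z + ρ x t * ρ y z := by
  intro x y z t
  obtain ⟨a, rfl⟩ := hf.2 x
  obtain ⟨b, rfl⟩ := hf.2 y
  obtain ⟨c, rfl⟩ := hf.2 z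
  obtain ⟨e, rfl⟩ := hf.2 t
  -- degenerate cases
  by_cases hac : a = c
  · subst hac; simp [(hρ0 _ _).2 rfl]
  by_cases heb : e = b
  · subst heb; simp [(hρ0 _ _).2 rfl]
  by_cases hab : a = b
  · subst hab
    simp only [(hρ0 _ _).2 rfl, zero_mul, zero_add]
    rw [hρs (f e) (f a), mul_comm]
  by_cases hec : e = c
  · subst hec
    simp only [(hρ0 _ _).2 rfl, mul_zero, zero_add]
    rw [hρs (f b) (f e), mul_comm]
  by_cases hae : a = e
  · subst hae
    simp only [(hρ0 _ _).2 rfl, zero_mul, add_zero]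
    rw [mul_comm]
  by_cases hbc : b = c
  · subst hbc
    simp only [(hρ0 _ _).2 rfl, mul_zero, add_zero]
    exact le_rfl
  -- nondegenerate: all relevant distances positive
  have pd : ∀ u v : X, u ≠ v → 0 < d u v := fun u v h =>
    pos_iff_ne_zero.2 (fun h0 => h ((hd0 u v).1 h0))
  have hdac := pd a c hac
  have hdab := pd a b hab
  have hdeb := pd e b (fun h => heb h)
  have hdec := pd e c hec
  have hdae := pd a e hae
  have hdbe := pd b e (fun h => heb h.symm)
  have hdbc := pd b c hbc
  set t₁ := d a c / d a b with ht₁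
  set t₂ := d e b / d e c with ht₂
  set t₃ := d a c / d a e with ht₃
  set t₄ := d b e / d b c with ht₄
  have ht₁pos : 0 < t₁ := div_pos hdac hdab
  have ht₂pos : 0 < t₂ := div_pos hdeb hdec
  have ht₃pos : 0 < t₃ := div_pos hdac hdae
  have ht₄pos : 0 < t₄ := div_pos hdbe hdbc
  -- quasisymmetry applications
  have q1 : ρ (f a) (f c) ≤ η t₁ * ρ (f a) (f b) :=
    hqs c b a t₁ ht₁pos (by rw [ht₁, div_mul_cancel₀ _ hdab.ne'])
  have q2 : ρ (f e) (f b) ≤ η t₂ * ρ (f e) (f c) :=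
    hqs b c e t₂ ht₂pos (by rw [ht₂, div_mul_cancel₀ _ hdec.ne'])
  have q3 : ρ (f a) (f c) ≤ η t₃ * ρ (f a) (f e) :=
    hqs c e a t₃ ht₃pos (by rw [ht₃, div_mul_cancel₀ _ hdae.ne'])
  have q4 : ρ (f b) (f e) ≤ η t₄ * ρ (f b) (f c) :=
    hqs e c b t₄ ht₄pos (by rw [ht₄, div_mul_cancel₀ _ hdbc.ne'])
  set A := ρ (f a) (f c) * ρ (f e) (f b) with hA
  set B := ρ (f a) (f b) * ρ (f e) (f c) with hB
  set C := ρ (f a) (f e) * ρ (f b) (f c) with hC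
  have hA1 : A ≤ (η t₁ * η t₂) * B := by
    calc A ≤ (η t₁ * ρ (f a) (f b)) * (η t₂ * ρ (f e) (f c)) := mul_le_mul' q1 q2
    _ = (η t₁ * η t₂) * B := by rw [hB]; ring
  have hA2 : A ≤ (η t₃ * η t₄) * C := by
    have : ρ (f e) (f b) = ρ (f b) (f e) := hρs _ _
    calc A = ρ (f a) (f c) * ρ (f b) (f e) := by rw [hA, this]
    _ ≤ (η t₃ * ρ (f a) (f e)) * (η t₄ * ρ (f b) (f c)) := mul_le_mul' q3 q4
    _ = (η t₃ * η t₄) * C := by rw [hC]; ring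
  -- easy subcases where an η product vanishes
  rcases eq_or_ne (η t₁ * η t₂) 0 with h12 | h12
  · have : A = 0 := le_antisymm (by calc A ≤ (η t₁ * η t₂) * B := hA1
      _ = 0 := by rw [h12, zero_mul]) zero_le
    rw [this]; exact zero_le
  rcases eq_or_ne (η t₃ * η t₄) 0 with h34 | h34
  · have : A = 0 := le_antisymm (by calc A ≤ (η t₃ * η t₄) * C := hA2
      _ = 0 := by rw [h34, zero_mul]) zero_le
    rw [this]; exact zero_le
  -- the key inequality from himp and Ptolemy in X
  have hP : d a c * d e b ≤ d a b * d e c + d a e * d b c := hX a b c e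
  have hprod : t₁ * t₂ * t₃ * t₄ ≤ t₁ * t₂ + t₃ * t₄ := by
    have heq12 : t₁ * t₂ = (d a c * d e b) / (d a b * d e c) := div_mul_div_comm _ _ _ _
    have heq34 : t₃ * t₄ = (d a c * d e b) / (d a e * d b c) := by
      rw [ht₃, ht₄, div_mul_div_comm, hds b e]
    set P := d a c * d e b
    set Q := d a b * d e c
    set R := d a e * d b c
    have hQ : Q ≠ 0 := (mul_pos hdab hdec).ne'
    have hR : R ≠ 0 := (mul_pos hdae hdbc).ne'
    rw [mul_assoc (t₁ * t₂), heq12, heq34, div_mul_div_comm,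
      div_add_div _ _ hQ hR, div_le_div_iff₀ (mul_pos (mul_pos hdab hdec) (mul_pos hdae hdbc)) (mul_pos (mul_pos hdab hdec) (mul_pos hdae hdbc))]
    have h1 : P * P ≤ P * R + Q * P := by
      calc P * P ≤ P * (Q + R) := mul_le_mul_right hP P
      _ = P * R + Q * P := by ring
    calc P * P * (Q * R) ≤ (P * R + Q * P) * (Q * R) := mul_le_mul_left h1 _
    _ = (P * R + Q * P) * (Q * R) := rfl
  have hkey : (η t₁ * η t₂) * (η t₃ * η t₄) ≤ (η t₁ * η t₂) + (η t₃ * η t₄) := by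
    have := himp t₁ t₂ t₃ t₄ hprod
    calc (η t₁ * η t₂) * (η t₃ * η t₄) = η t₁ * η t₂ * η t₃ * η t₄ := by ring
    _ ≤ _ := this
  set h₁₂ := η t₁ * η t₂
  set h₃₄ := η t₃ * η t₄
  have hpos : 0 < h₃₄ + h₁₂ :=
    pos_iff_ne_zero.2 (fun h0 => h34 (by
      have := add_eq_zero.1 h0
      exact this.1))
  have step : A * (h₃₄ + h₁₂) ≤ (B + C) * (h₃₄ + h₁₂) := by
    calc A * (h₃₄ + h₁₂) = A * h₃₄ + A * h₁₂ := mul_add _ _ _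
    _ ≤ (h₁₂ * B) * h₃₄ + (h₃₄ * C) * h₁₂ :=
        add_le_add (mul_le_mul_left hA1 _) (mul_le_mul_left hA2 _)
    _ = (h₁₂ * h₃₄) * (B + C) := by ring
    _ ≤ (h₁₂ + h₃₄) * (B + C) := mul_le_mul_left hkey _
    _ = (B + C) * (h₃₄ + h₁₂) := by ring
  exact le_of_mul_le_mul_right step hpos
end

section
/- Let X be a Ptolemaic semimetric space, Y a semimetric space, and f : X → Y a bijective η-quasisymmetric mapping with η(t) = t^α for some 0 < α ≤ 1. Then Y is a Ptolemaic semimetric space. -/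
open NNReal

theorem quasisymmetric_power_preserves_ptolemaic
    {X Y : Type*} (d : X → X → ℝ≥0) (ρ : Y → Y → ℝ≥0)
    (hd0 : ∀ x y, d x y = 0 ↔ x = y) (hds : ∀ x y, d x y = d y x)
    (hρ0 : ∀ x y, ρ x y = 0 ↔ x = y) (hρs : ∀ x y, ρ x y = ρ y x)
    (hX : ∀ x y z t : X, d x z * d t y ≤ d x y * d t z + d x t * d y z)
    (f : X → Y) (hf : Function.Bijective f)
    (α : ℝ) (hα0 : 0 < α) (hα1 : α ≤ 1)
    (hqs : ∀ (a b x : X) (t : ℝ≥0), 0 < t →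
      d x a ≤ t * d x b → ρ (f x) (f a) ≤ t ^ α * ρ (f x) (f b)) :
    ∀ x y z t : Y, ρ x z * ρ t y ≤ ρ x y * ρ t z + ρ x t * ρ y z := by
  obtain ⟨hinj, hsurj⟩ := hf
  -- key ratio identity
  have key_le : ∀ x a b : X, x ≠ a → x ≠ b →
      ρ (f x) (f a) * d x b ^ α ≤ ρ (f x) (f b) * d x a ^ α := by
    intro x a b hxa hxb
    have hda : d x a ≠ 0 := fun h => hxa ((hd0 x a).1 h)
    have hdb : d x b ≠ 0 := fun h => hxb ((hd0 x b).1 h)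
    have ht : (0:ℝ≥0) < d x a / d x b :=
      zero_lt_iff.mpr (div_ne_zero hda hdb)
    have h1 : d x a ≤ (d x a / d x b) * d x b := by
      rw [div_mul_cancel₀ _ hdb]
    have h2 := hqs a b x _ ht h1
    calc ρ (f x) (f a) * d x b ^ α
        ≤ ((d x a / d x b) ^ α * ρ (f x) (f b)) * d x b ^ α :=
          mul_le_mul_left h2 _
      _ = ρ (f x) (f b) * d x a ^ α := by
          have hdbα : d x b ^ α ≠ 0 := by
            simpa [NNReal.rpow_eq_zero_iff, hα0.ne'] using hdb
          rw [NNReal.div_rpow, mul_comm _ (ρ (f x) (f b)), mul_assoc,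
            div_mul_cancel₀ _ hdbα]
  have key : ∀ x a b : X, x ≠ a → x ≠ b →
      ρ (f x) (f a) * d x b ^ α = ρ (f x) (f b) * d x a ^ α :=
    fun x a b hxa hxb => le_antisymm (key_le x a b hxa hxb) (key_le x b a hxb hxa)
  intro x y z t
  obtain ⟨a, rfl⟩ := hsurj x
  obtain ⟨b, rfl⟩ := hsurj y
  obtain ⟨c, rfl⟩ := hsurj z
  obtain ⟨e, rfl⟩ := hsurj t
  by_cases hac : a = c
  · subst hac; simp [(hρ0 _ _).2 rfl]
  by_cases heb : e = b
  · subst heb; simp [(hρ0 _ _).2 rfl]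
  by_cases hab : a = b
  · subst hab
    simp only [(hρ0 (f a) (f a)).2 rfl, zero_mul, zero_add]
    rw [hρs (f e) (f a)]
    rw [mul_comm]
  by_cases hec : e = c
  · subst hec
    simp only [(hρ0 (f e) (f e)).2 rfl, mul_zero, zero_add]
    rw [hρs (f e) (f b)]
  by_cases hae : a = e
  · subst hae
    simp only [(hρ0 (f a) (f a)).2 rfl, zero_mul, add_zero]
    rw [mul_comm]
  by_cases hbc : b = c
  · subst hbc
    simp only [(hρ0 (f b) (f b)).2 rfl, mul_zero, add_zero]
    rw [hρs (f e) (f b)]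
  -- main case: all distinct
  have hk1 := key a c b hac hab
  have hk2 := key e b c (Ne.symm (fun h => heb h.symm)) hec
  have hk3 := key a e b hae hab
  have hk4 := key c b e (fun h => hbc h.symm) (fun h => hec h.symm)
  have hdab : d a b ≠ 0 := fun h => hab ((hd0 a b).1 h)
  have hdec : d e c ≠ 0 := fun h => hec ((hd0 e c).1 h)
  have hP : (0:ℝ≥0) < d a b ^ α * d e c ^ α := by
    rw [zero_lt_iff]
    have h1 : d a b ^ α ≠ 0 := by
      simpa [NNReal.rpow_eq_zero_iff, hα0.ne'] using hdab
    have h2 : d e c ^ α ≠ 0 := by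
      simpa [NNReal.rpow_eq_zero_iff, hα0.ne'] using hdec
    exact mul_ne_zero h1 h2
  refine le_of_mul_le_mul_right ?_ hP
  have ptol : (d a c * d e b) ^ α ≤ (d a b * d e c) ^ α + (d a e * d c b) ^ α := by
    have h := hX a b c e
    calc (d a c * d e b) ^ α ≤ (d a b * d e c + d a e * d b c) ^ α :=
          NNReal.rpow_le_rpow h hα0.le
      _ ≤ (d a b * d e c) ^ α + (d a e * d b c) ^ α :=
          NNReal.rpow_add_le_add_rpow _ _ hα0.le hα1
      _ = (d a b * d e c) ^ α + (d a e * d c b) ^ α := by rw [hds b c]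
  calc ρ (f a) (f c) * ρ (f e) (f b) * (d a b ^ α * d e c ^ α)
      = (ρ (f a) (f c) * d a b ^ α) * (ρ (f e) (f b) * d e c ^ α) := by ring
    _ = (ρ (f a) (f b) * d a c ^ α) * (ρ (f e) (f c) * d e b ^ α) := by rw [hk1, hk2]
    _ = (ρ (f a) (f b) * ρ (f e) (f c)) * (d a c * d e b) ^ α := by
        rw [NNReal.mul_rpow]; ring
    _ ≤ (ρ (f a) (f b) * ρ (f e) (f c)) *
        ((d a b * d e c) ^ α + (d a e * d c b) ^ α) := mul_le_mul_right ptol _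
    _ = (ρ (f a) (f b) * ρ (f e) (f c)) * (d a b ^ α * d e c ^ α)
        + (ρ (f a) (f b) * d a e ^ α) * (ρ (f e) (f c) * d c b ^ α) := by
        rw [NNReal.mul_rpow, NNReal.mul_rpow]; ring
    _ = (ρ (f a) (f b) * ρ (f e) (f c)) * (d a b ^ α * d e c ^ α)
        + (ρ (f a) (f e) * d a b ^ α) * (ρ (f c) (f e) * d c b ^ α) := by
        rw [hk3, hρs (f e) (f c)]
    _ = (ρ (f a) (f b) * ρ (f e) (f c)) * (d a b ^ α * d e c ^ α)
        + (ρ (f a) (f e) * d a b ^ α) * (ρ (f c) (f b) * d c e ^ α) := by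
        rw [hk4]
    _ = (ρ (f a) (f b) * ρ (f e) (f c) + ρ (f a) (f e) * ρ (f b) (f c))
        * (d a b ^ α * d e c ^ α) := by
        rw [hρs (f c) (f b), hds c e]; ring
end

section
/- Let (X,d) be a semimetric space, (Y,ρ) a metric space, and Φ : ℝ≥0 × ℝ≥0 → ℝ≥0 symmetric, monotone increasing in both arguments, Φ(0,0)=0, a ≤ Φ(0,a) for all a > 0, and kΦ(u,v) = Φ(ku,kv) for all k > 0. Suppose d(x,z)+d(t,y) ≤ Φ(d(x,y)+d(t,z), d(x,t)+d(y,z)) for all x,y,z,t ∈ X. Let f : X → Y be a bijective η-quasisymmetric mapping. If for all t₁,...,t₅ > 0, the inequality 1 + (1/t₁)(1/t₅) ≤ Φ(1/t₁ + 1/t₂, 1/t₃ + 1/t₄) implies 1 + η(1/t₁)η(1/t₅) ≤ Φ(1/η(t₁) + 1/η(t₂), 1/η(t₃) + 1/η(t₄)), then ρ(x,z)+ρ(t,y) ≤ Φ(ρ(x,y)+ρ(t,z), ρ(x,t)+ρ(y,z)) for all x,y,z,t ∈ Y. -/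
open NNReal

theorem quasisymmetric_preserves_additive_quadruple
    {X Y : Type*} (d : X → X → ℝ≥0)
    (hd0 : ∀ x y, d x y = 0 ↔ x = y) (hds : ∀ x y, d x y = d y x)
    [MetricSpace Y]
    (Φ : ℝ≥0 → ℝ≥0 → ℝ≥0)
    (hΦsymm : ∀ u v, Φ u v = Φ v u)
    (hΦmono : ∀ u₁ u₂ v₁ v₂, u₁ ≤ u₂ → v₁ ≤ v₂ → Φ u₁ v₁ ≤ Φ u₂ v₂)
    (hΦ00 : Φ 0 0 = 0)
    (ha : ∀ a : ℝ≥0, 0 < a → a ≤ Φ 0 a)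
    (hΦhom : ∀ k u v : ℝ≥0, 0 < k → k * Φ u v = Φ (k * u) (k * v))
    (hX : ∀ x y z t : X, d x z + d t y ≤ Φ (d x y + d t z) (d x t + d y z))
    (f : X → Y) (hf : Function.Bijective f)
    (η : ℝ≥0 → ℝ≥0) (hη : IsHomeomorph η)
    (hqs : ∀ (a b x : X) (t : ℝ≥0), 0 < t →
      d x a ≤ t * d x b → nndist (f x) (f a) ≤ η t * nndist (f x) (f b))
    (himp : ∀ t₁ t₂ t₃ t₄ t₅ : ℝ≥0, 0 < t₁ → 0 < t₂ → 0 < t₃ → 0 < t₄ → 0 < t₅ →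
      1 + (1 / t₁) * (1 / t₅) ≤ Φ (1 / t₁ + 1 / t₂) (1 / t₃ + 1 / t₄) →
      1 + η (1 / t₁) * η (1 / t₅) ≤
        Φ (1 / η t₁ + 1 / η t₂) (1 / η t₃ + 1 / η t₄)) :
    ∀ x y z t : Y,
      nndist x z + nndist t y ≤
        Φ (nndist x y + nndist t z) (nndist x t + nndist y z) := by
  have key : ∀ a u v : ℝ≥0, a ≤ u → a ≤ Φ u v := by
    intro a u v hau
    rcases (zero_le : (0:ℝ≥0) ≤ a).eq_or_lt with h0 | h0
    · exact h0 ▸ zero_le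
    · calc a ≤ Φ 0 a := ha a h0
        _ ≤ Φ v u := hΦmono _ _ _ _ (zero_le : (0:ℝ≥0) ≤ v) hau
        _ = Φ u v := (hΦsymm u v).symm
  have key' : ∀ a u v : ℝ≥0, a ≤ v → a ≤ Φ u v := by
    intro a u v hav
    rw [hΦsymm]
    exact key a v u hav
  intro x y z t
  rcases eq_or_ne x z with rfl | hxz
  · simp only [nndist_self, zero_add]
    exact key _ _ _ ((nndist_triangle t x y).trans_eq (add_comm _ _))
  rcases eq_or_ne t y with rfl | hty
  · simp only [nndist_self, add_zero]
    exact key _ _ _ (nndist_triangle x t z)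
  rcases eq_or_ne x y with rfl | hxy
  · exact key' _ _ _ (le_of_eq (by rw [nndist_comm t x, add_comm]))
  rcases eq_or_ne t z with rfl | htz
  · exact key' _ _ _ (le_of_eq (by rw [nndist_comm t y]))
  rcases eq_or_ne x t with rfl | hxt
  · exact key _ _ _ (le_of_eq (add_comm _ _))
  rcases eq_or_ne y z with rfl | hyz
  · exact key _ _ _ le_rfl
  -- main case: pull back along f
  obtain ⟨p, rfl⟩ := hf.2 x
  obtain ⟨q, rfl⟩ := hf.2 y
  obtain ⟨r, rfl⟩ := hf.2 z
  obtain ⟨s, rfl⟩ := hf.2 t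
  have hdpos : ∀ {a b : X}, f a ≠ f b → 0 < d a b := by
    intro a b h
    exact pos_iff_ne_zero.mpr fun h0 => h (congrArg f ((hd0 a b).mp h0))
  have dpr : 0 < d p r := hdpos hxz
  have dsq : 0 < d s q := hdpos hty
  have dpq : 0 < d p q := hdpos hxy
  have dsr : 0 < d s r := hdpos htz
  have dps : 0 < d p s := hdpos hxt
  have dqr : 0 < d q r := hdpos hyz
  have hDxz : 0 < nndist (f p) (f r) := pos_iff_ne_zero.mpr fun h0 => hxz (nndist_eq_zero.mp h0)
  -- hypothesis of himp
  have hhyp : 1 + (1 / (d p r / d p q)) * (1 / (d p q / d s q)) ≤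
      Φ (1 / (d p r / d p q) + 1 / (d p r / d s r))
        (1 / (d p r / d p s) + 1 / (d p r / d q r)) := by
    simp only [one_div_div]
    rw [mul_comm, div_mul_div_cancel₀ dpq.ne']
    have h := mul_le_mul_right (hX p q r s) (d p r)⁻¹
    rw [hΦhom _ _ _ (inv_pos.mpr dpr)] at h
    simpa [mul_add, inv_mul_cancel₀ dpr.ne', inv_mul_eq_div] using h
  have hcon := himp (d p r / d p q) (d p r / d s r) (d p r / d p s) (d p r / d q r)
    (d p q / d s q) (div_pos dpr dpq) (div_pos dpr dsr) (div_pos dpr dps)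
    (div_pos dpr dqr) (div_pos dpq dsq) hhyp
  simp only [one_div_div] at hcon
  -- quasisymmetry consequences
  have hA : nndist (f p) (f q) ≤ η (d p q / d p r) * nndist (f p) (f r) :=
    hqs q r p _ (div_pos dpq dpr) (div_mul_cancel₀ _ dpr.ne').ge
  have hB : nndist (f q) (f s) ≤ η (d s q / d p q) * nndist (f q) (f p) :=
    hqs s p q _ (div_pos dsq dpq)
      (by rw [hds q s, hds q p]; exact (div_mul_cancel₀ _ dpq.ne').ge)
  have hC : nndist (f p) (f r) ≤ η (d p r / d p q) * nndist (f p) (f q) :=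
    hqs r q p _ (div_pos dpr dpq) (div_mul_cancel₀ _ dpq.ne').ge
  have hD : nndist (f p) (f r) ≤ η (d p r / d s r) * nndist (f s) (f r) := by
    rw [nndist_comm (f p), nndist_comm (f s)]
    exact hqs p s r _ (div_pos dpr dsr)
      (by rw [hds r p, hds r s]; exact (div_mul_cancel₀ _ dsr.ne').ge)
  have hE : nndist (f p) (f r) ≤ η (d p r / d p s) * nndist (f p) (f s) :=
    hqs r s p _ (div_pos dpr dps) (div_mul_cancel₀ _ dps.ne').ge
  have hF : nndist (f p) (f r) ≤ η (d p r / d q r) * nndist (f q) (f r) := by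
    rw [nndist_comm (f p), nndist_comm (f q)]
    exact hqs p q r _ (div_pos dpr dqr)
      (by rw [hds r p, hds r q]; exact (div_mul_cancel₀ _ dqr.ne').ge)
  -- helper: lower bound on ratios
  have haux : ∀ (c B : ℝ≥0), nndist (f p) (f r) ≤ c * B →
      1 / c ≤ B / nndist (f p) (f r) := by
    intro c B h
    have hcB : 0 < c * B := lt_of_lt_of_le hDxz h
    have hc : 0 < c := pos_iff_ne_zero.mpr fun h0 => by simp [h0] at hcB
    rw [div_le_div_iff₀ hc hDxz, one_mul]
    calc nndist (f p) (f r) ≤ c * B := h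
      _ = B * c := mul_comm _ _
  -- left-hand side bound
  have hL : nndist (f s) (f q) ≤
      η (d p q / d p r) * η (d s q / d p q) * nndist (f p) (f r) := by
    calc nndist (f s) (f q) = nndist (f q) (f s) := nndist_comm _ _
      _ ≤ η (d s q / d p q) * nndist (f q) (f p) := hB
      _ = η (d s q / d p q) * nndist (f p) (f q) := by rw [nndist_comm (f q)]
      _ ≤ η (d s q / d p q) * (η (d p q / d p r) * nndist (f p) (f r)) :=
          mul_le_mul_right hA _
      _ = η (d p q / d p r) * η (d s q / d p q) * nndist (f p) (f r) := by ring
  have hLdiv : nndist (f s) (f q) / nndist (f p) (f r) ≤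
      η (d p q / d p r) * η (d s q / d p q) := by
    rw [div_le_iff₀ hDxz]
    exact hL
  -- right-hand side bounds
  have h1 := haux _ _ hC
  have h2 := haux _ _ hD
  have h3 := haux _ _ hE
  have h4 := haux _ _ hF
  have hsum1 : 1 / η (d p r / d p q) + 1 / η (d p r / d s r) ≤
      (nndist (f p) (f q) + nndist (f s) (f r)) / nndist (f p) (f r) := by
    rw [add_div]
    exact add_le_add h1 h2
  have hsum2 : 1 / η (d p r / d p s) + 1 / η (d p r / d q r) ≤
      (nndist (f p) (f s) + nndist (f q) (f r)) / nndist (f p) (f r) := by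
    rw [add_div]
    exact add_le_add h3 h4
  have final : 1 + nndist (f s) (f q) / nndist (f p) (f r) ≤
      Φ ((nndist (f p) (f q) + nndist (f s) (f r)) / nndist (f p) (f r))
        ((nndist (f p) (f s) + nndist (f q) (f r)) / nndist (f p) (f r)) :=
    le_trans (add_le_add le_rfl hLdiv)
      (le_trans hcon (hΦmono _ _ _ _ hsum1 hsum2))
  have hmul := mul_le_mul_right final (nndist (f p) (f r))
  rw [hΦhom _ _ _ hDxz, mul_add, mul_one, mul_comm (nndist (f p) (f r))
    (nndist (f s) (f q) / nndist (f p) (f r)), div_mul_cancel₀ _ hDxz.ne',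
    mul_comm (nndist (f p) (f r)) (_ / nndist (f p) (f r)),
    div_mul_cancel₀ _ hDxz.ne',
    mul_comm (nndist (f p) (f r)) (_ / nndist (f p) (f r)),
    div_mul_cancel₀ _ hDxz.ne'] at hmul
  exact hmul
end

section
/- Let (X,d) be an additive metric space, (Y,ρ) a metric space, and f : X → Y a bijective η-quasisymmetric mapping. If for all t₁,...,t₅ > 0, 1 + (1/t₁)(1/t₅) ≤ max{1/t₁ + 1/t₂, 1/t₃ + 1/t₄} implies 1 + η(1/t₁)η(1/t₅) ≤ max{1/η(t₁) + 1/η(t₂), 1/η(t₃) + 1/η(t₄)}, then (Y,ρ) is an additive metric space. -/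
open NNReal

theorem quasisymmetric_preserves_additive_metric
    {X Y : Type*} [MetricSpace X] [MetricSpace Y]
    (hX : ∀ x y z t : X,
      dist x z + dist t y ≤ max (dist x y + dist t z) (dist x t + dist y z))
    (f : X → Y) (hf : Function.Bijective f)
    (η : ℝ≥0 → ℝ≥0) (hη : IsHomeomorph η)
    (hqs : ∀ (a b x : X) (t : ℝ≥0), 0 < t →
      nndist x a ≤ t * nndist x b → nndist (f x) (f a) ≤ η t * nndist (f x) (f b))
    (himp : ∀ t₁ t₂ t₃ t₄ t₅ : ℝ≥0, 0 < t₁ → 0 < t₂ → 0 < t₃ → 0 < t₄ → 0 < t₅ →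
      1 + (1 / t₁) * (1 / t₅) ≤ max (1 / t₁ + 1 / t₂) (1 / t₃ + 1 / t₄) →
      1 + η (1 / t₁) * η (1 / t₅) ≤
        max (1 / η t₁ + 1 / η t₂) (1 / η t₃ + 1 / η t₄)) :
    ∀ x y z t : Y,
      dist x z + dist t y ≤ max (dist x y + dist t z) (dist x t + dist y z) := by
  intro x y z t
  by_cases hxz : x = z
  · subst hxz
    have h := dist_triangle t x y
    simp only [dist_self, zero_add]
    exact le_max_of_le_left (by linarith)
  by_cases hty : t = y
  · subst hty
    simp only [dist_self, add_zero]
    exact le_max_of_le_left (dist_triangle x t z)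
  by_cases hxy : x = y
  · subst hxy
    apply le_max_of_le_right
    rw [dist_comm x t]
    linarith
  by_cases htz : t = z
  · subst htz
    apply le_max_of_le_right
    rw [dist_comm t y]
  by_cases hxt : x = t
  · subst hxt
    exact le_max_of_le_left (by linarith)
  by_cases hyz : y = z
  · subst hyz
    exact le_max_of_le_left (by rw [dist_comm t y])
  -- main case: all four points distinct
  obtain ⟨x', rfl⟩ := hf.2 x
  obtain ⟨y', rfl⟩ := hf.2 y
  obtain ⟨z', rfl⟩ := hf.2 z
  obtain ⟨t', rfl⟩ := hf.2 t
  have hne : ∀ {a b : X}, f a ≠ f b → nndist a b ≠ 0 := by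
    intro a b hab h0
    exact hab (congrArg f (by simpa using h0))
  have hxy' : nndist x' y' ≠ 0 := hne hxy
  have hxz' : nndist x' z' ≠ 0 := hne hxz
  have hxt' : nndist x' t' ≠ 0 := hne hxt
  have hty' : nndist t' y' ≠ 0 := hne hty
  have htz' : nndist t' z' ≠ 0 := hne htz
  have hyz' : nndist y' z' ≠ 0 := hne hyz
  set A := nndist x' y' with hA
  set B := nndist x' z' with hB
  set C := nndist x' t' with hC
  set D := nndist t' y' with hD
  set E := nndist t' z' with hE
  set F := nndist y' z' with hF
  -- the additive inequality in X, in ℝ≥0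
  have hX' : B + D ≤ max (A + E) (C + F) := by
    rw [← NNReal.coe_le_coe]
    push_cast
    simpa only [hA, hB, hC, hD, hE, hF, ← dist_nndist] using hX x' y' z' t'
  -- the five ratios
  have ht₁ : 0 < B / A := pos_iff_ne_zero.mpr (div_ne_zero hxz' hxy')
  have ht₂ : 0 < B / E := pos_iff_ne_zero.mpr (div_ne_zero hxz' htz')
  have ht₃ : 0 < B / C := pos_iff_ne_zero.mpr (div_ne_zero hxz' hxt')
  have ht₄ : 0 < B / F := pos_iff_ne_zero.mpr (div_ne_zero hxz' hyz')
  have ht₅ : 0 < A / D := pos_iff_ne_zero.mpr (div_ne_zero hxy' hty')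
  have hprem : 1 + (1 / (B/A)) * (1 / (A/D)) ≤
      max (1 / (B/A) + 1 / (B/E)) (1 / (B/C) + 1 / (B/F)) := by
    rw [one_div_div, one_div_div, one_div_div, one_div_div, one_div_div,
      div_mul_div_comm, mul_comm A D, mul_div_mul_right D B hxy',
      ← add_div, ← add_div, max_div_div_right (zero_le (a := B)),
      ← div_self hxz']
    rw [← add_div, div_le_div_iff_of_pos_right (pos_iff_ne_zero.mpr hxz')]
    exact hX'
  have hconc := himp (B/A) (B/E) (B/C) (B/F) (A/D) ht₁ ht₂ ht₃ ht₄ ht₅ hprem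
  -- quasisymmetry consequences
  have hq1 : nndist (f x') (f z') ≤ η (B/A) * nndist (f x') (f y') :=
    hqs z' y' x' (B/A) ht₁ (le_of_eq (div_mul_cancel₀ B hxy').symm)
  have hq2 : nndist (f x') (f z') ≤ η (B/E) * nndist (f t') (f z') := by
    have := hqs x' t' z' (B/E) ht₂ (by
      rw [nndist_comm z' x', nndist_comm z' t']
      exact le_of_eq (div_mul_cancel₀ B htz').symm)
    rwa [nndist_comm (f z') (f x'), nndist_comm (f z') (f t')] at this
  have hq3 : nndist (f x') (f z') ≤ η (B/C) * nndist (f x') (f t') :=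
    hqs z' t' x' (B/C) ht₃ (le_of_eq (div_mul_cancel₀ B hxt').symm)
  have hq4 : nndist (f x') (f z') ≤ η (B/F) * nndist (f y') (f z') := by
    have := hqs x' y' z' (B/F) ht₄ (by
      rw [nndist_comm z' x', nndist_comm z' y']
      exact le_of_eq (div_mul_cancel₀ B hyz').symm)
    rwa [nndist_comm (f z') (f x'), nndist_comm (f z') (f y')] at this
  have hq5 : nndist (f x') (f y') ≤ η (1/(B/A)) * nndist (f x') (f z') :=
    hqs y' z' x' (1/(B/A)) (by positivity) (by
      rw [one_div_div]
      exact le_of_eq (div_mul_cancel₀ A hxz').symm)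
  have hq6 : nndist (f t') (f y') ≤ η (1/(A/D)) * nndist (f x') (f y') := by
    have := hqs t' x' y' (1/(A/D)) (by positivity) (by
      rw [one_div_div, nndist_comm y' t', nndist_comm y' x']
      exact le_of_eq (div_mul_cancel₀ D hxy').symm)
    rwa [nndist_comm (f y') (f t'), nndist_comm (f y') (f x')] at this
  set P := nndist (f x') (f z') with hP
  set Q := nndist (f x') (f y') with hQ
  set R := nndist (f x') (f t') with hR
  set S := nndist (f t') (f y') with hS
  set T := nndist (f t') (f z') with hT
  set U := nndist (f y') (f z') with hU
  have hPne : P ≠ 0 := by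
    rw [hP]
    intro h0
    exact hxz (by simpa using h0)
  have he1 : η (B/A) ≠ 0 := by
    intro h0; rw [h0, zero_mul, le_zero_iff] at hq1; exact hPne hq1
  have he2 : η (B/E) ≠ 0 := by
    intro h0; rw [h0, zero_mul, le_zero_iff] at hq2; exact hPne hq2
  have he3 : η (B/C) ≠ 0 := by
    intro h0; rw [h0, zero_mul, le_zero_iff] at hq3; exact hPne hq3
  have he4 : η (B/F) ≠ 0 := by
    intro h0; rw [h0, zero_mul, le_zero_iff] at hq4; exact hPne hq4
  -- final chain in ℝ≥0
  have hfinal : P + S ≤ max (Q + T) (R + U) := by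
    calc P + S ≤ P * (1 + η (1/(B/A)) * η (1/(A/D))) := by
            rw [mul_add, mul_one]
            refine add_le_add_right ?_ P
            calc S ≤ η (1/(A/D)) * Q := hq6
              _ ≤ η (1/(A/D)) * (η (1/(B/A)) * P) := mul_le_mul_right hq5 _
              _ = P * (η (1/(B/A)) * η (1/(A/D))) := by ring
      _ ≤ P * max (1 / η (B/A) + 1 / η (B/E)) (1 / η (B/C) + 1 / η (B/F)) :=
            mul_le_mul_right hconc P
      _ ≤ max (Q + T) (R + U) := by
            rw [mul_max]
            refine max_le_max ?_ ?_
            · rw [mul_add, mul_one_div, mul_one_div]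
              refine add_le_add ((div_le_iff₀ (pos_iff_ne_zero.mpr he1)).mpr ?_)
                ((div_le_iff₀ (pos_iff_ne_zero.mpr he2)).mpr ?_)
              · rwa [mul_comm]
              · rwa [mul_comm]
            · rw [mul_add, mul_one_div, mul_one_div]
              refine add_le_add ((div_le_iff₀ (pos_iff_ne_zero.mpr he3)).mpr ?_)
                ((div_le_iff₀ (pos_iff_ne_zero.mpr he4)).mpr ?_)
              · rwa [mul_comm]
              · rwa [mul_comm]
  rw [← NNReal.coe_le_coe] at hfinal
  push_cast at hfinal
  simpa only [← dist_nndist, hP, hQ, hR, hS, hT, hU] using hfinal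
end

section
/- Let (X,d) be an additive metric space, (Y,ρ) a metric space, and f : X → Y a bijective η-quasisymmetric mapping with η(t) = t. Then (Y,ρ) is an additive metric space. -/
open NNReal

theorem id_quasisymmetric_preserves_additive_metric
    {X Y : Type*} [MetricSpace X] [MetricSpace Y]
    (hX : ∀ x y z t : X,
      dist x z + dist t y ≤ max (dist x y + dist t z) (dist x t + dist y z))
    (f : X → Y) (hf : Function.Bijective f)
    (hqs : ∀ (a b x : X) (t : ℝ≥0), 0 < t →
      nndist x a ≤ t * nndist x b → nndist (f x) (f a) ≤ t * nndist (f x) (f b)) :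
    ∀ x y z t : Y,
      dist x z + dist t y ≤ max (dist x y + dist t z) (dist x t + dist y z) := by
  -- key : from a common center, ratios are preserved
  have key : ∀ u v w : X,
      nndist (f u) (f v) * nndist u w = nndist (f u) (f w) * nndist u v := by
    intro u v w
    by_cases hv : nndist u v = 0
    · have : u = v := by rwa [nndist_eq_zero] at hv
      subst this
      simp
    by_cases hw : nndist u w = 0
    · have : u = w := by rwa [nndist_eq_zero] at hw
      subst this
      simp
    · have h1 : nndist (f u) (f v) ≤ (nndist u v / nndist u w) * nndist (f u) (f w) := by
        apply hqs
        · exact pos_iff_ne_zero.mpr (by simp [div_eq_zero_iff, hv, hw])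
        · rw [div_mul_cancel₀ _ hw]
      have h2 : nndist (f u) (f w) ≤ (nndist u w / nndist u v) * nndist (f u) (f v) := by
        apply hqs
        · exact pos_iff_ne_zero.mpr (by simp [div_eq_zero_iff, hv, hw])
        · rw [div_mul_cancel₀ _ hv]
      apply le_antisymm
      · calc nndist (f u) (f v) * nndist u w
            ≤ (nndist u v / nndist u w) * nndist (f u) (f w) * nndist u w := by
              exact mul_le_mul_left h1 _
          _ = nndist (f u) (f w) * nndist u v := by
              field_simp
      · calc nndist (f u) (f w) * nndist u v
            ≤ (nndist u w / nndist u v) * nndist (f u) (f v) * nndist u v := by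
              exact mul_le_mul_left h2 _
          _ = nndist (f u) (f v) * nndist u w := by
              field_simp
  -- claim : cross-ratio between arbitrary pairs
  have claim : ∀ u v p q : X,
      nndist (f u) (f v) * nndist p q = nndist (f p) (f q) * nndist u v := by
    intro u v p q
    by_cases hup : u = p
    · subst hup
      rw [key u v q, mul_comm]
    · have hup' : nndist u p ≠ 0 := by simpa [nndist_eq_zero] using hup
      have e1 : nndist (f u) (f v) * nndist u p = nndist (f u) (f p) * nndist u v :=
        key u v p
      have e2 : nndist (f p) (f u) * nndist p q = nndist (f p) (f q) * nndist p u :=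
        key p u q
      have e2' : nndist (f u) (f p) * nndist p q = nndist (f p) (f q) * nndist u p := by
        rwa [nndist_comm (f p) (f u), nndist_comm p u] at e2
      have hcancel : nndist (f u) (f v) * nndist p q * nndist u p
          = nndist (f p) (f q) * nndist u v * nndist u p := by
        calc nndist (f u) (f v) * nndist p q * nndist u p
            = (nndist (f u) (f v) * nndist u p) * nndist p q := by ring
          _ = (nndist (f u) (f p) * nndist u v) * nndist p q := by rw [e1]
          _ = (nndist (f u) (f p) * nndist p q) * nndist u v := by ring
          _ = (nndist (f p) (f q) * nndist u p) * nndist u v := by rw [e2']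
          _ = nndist (f p) (f q) * nndist u v * nndist u p := by ring
      exact mul_right_cancel₀ hup' hcancel
  intro x y z t
  obtain ⟨a, rfl⟩ := hf.2 x
  obtain ⟨b, rfl⟩ := hf.2 y
  obtain ⟨c, rfl⟩ := hf.2 z
  obtain ⟨d, rfl⟩ := hf.2 t
  by_cases htriv : a = b ∧ a = c ∧ a = d
  · obtain ⟨h1, h2, h3⟩ := htriv
    subst h1; subst h2; subst h3
    simp
  · -- there exists a pair p ≠ q among a,b,c,d
    have hpq : ∃ p q : X, p ≠ q := by
      by_contra h
      push_neg at h
      exact htriv ⟨h a b, h a c, h a d⟩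
    obtain ⟨p, q, hpq⟩ := hpq
    have hpq0 : nndist p q ≠ 0 := by simpa [nndist_eq_zero] using hpq
    set c0 : ℝ≥0 := nndist (f p) (f q) / nndist p q with hc0
    have hscale : ∀ u v : X, dist (f u) (f v) = (c0 : ℝ) * dist u v := by
      intro u v
      have h := claim u v p q
      have : nndist (f u) (f v) = c0 * nndist u v := by
        rw [hc0, div_mul_eq_mul_div, ← h, mul_div_assoc, div_self hpq0, mul_one]
      calc dist (f u) (f v) = ((nndist (f u) (f v) : ℝ≥0) : ℝ) := by
            rw [dist_nndist]
        _ = ((c0 * nndist u v : ℝ≥0) : ℝ) := by rw [this]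
        _ = (c0 : ℝ) * dist u v := by rw [NNReal.coe_mul, dist_nndist]
    rw [hscale a c, hscale d b, hscale a b, hscale d c, hscale a d, hscale b c,
      ← mul_add, ← mul_add, ← mul_add, ← mul_max_of_nonneg _ _ c0.coe_nonneg]
    exact mul_le_mul_of_nonneg_left (hX a b c d) c0.coe_nonneg
end

section
/- Let (X,d) and (Y,ρ) be semimetric spaces and Φ : ℝ≥0 × ℝ≥0 → ℝ≥0 be symmetric, monotone increasing in both arguments, with Φ(0,0)=0, a ≤ Φ(0,a) for all a > 0, and kΦ(u,v) = Φ(ku,kv) for all k > 0. Suppose d(x,z)d(t,y) ≤ Φ(d(x,y)d(t,z), d(x,t)d(y,z)) for all x,y,z,t ∈ X. Let f : X → Y be a bijective η-quasimöbius mapping. If for all t₁,t₂ > 0, 1 ≤ Φ(t₁,t₂) implies 1 ≤ Φ(1/η(t₁⁻¹), 1/η(t₂⁻¹)), then ρ(x,z)ρ(t,y) ≤ Φ(ρ(x,y)ρ(t,z), ρ(x,t)ρ(y,z)) for all x,y,z,t ∈ Y. -/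
open NNReal

theorem quasimobius_preserves_mult_quadruple
    {X Y : Type*} (d : X → X → ℝ≥0) (ρ : Y → Y → ℝ≥0)
    (hd0 : ∀ x y, d x y = 0 ↔ x = y) (hds : ∀ x y, d x y = d y x)
    (hρ0 : ∀ x y, ρ x y = 0 ↔ x = y) (hρs : ∀ x y, ρ x y = ρ y x)
    (Φ : ℝ≥0 → ℝ≥0 → ℝ≥0)
    (hΦsymm : ∀ u v, Φ u v = Φ v u)
    (hΦmono : ∀ u₁ u₂ v₁ v₂, u₁ ≤ u₂ → v₁ ≤ v₂ → Φ u₁ v₁ ≤ Φ u₂ v₂)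
    (hΦ00 : Φ 0 0 = 0)
    (ha : ∀ a : ℝ≥0, 0 < a → a ≤ Φ 0 a)
    (hΦhom : ∀ k u v : ℝ≥0, 0 < k → k * Φ u v = Φ (k * u) (k * v))
    (hX : ∀ x y z t : X, d x z * d t y ≤ Φ (d x y * d t z) (d x t * d y z))
    (f : X → Y) (hf : Function.Bijective f)
    (η : ℝ≥0 → ℝ≥0) (hη : IsHomeomorph η)
    (hqm : ∀ x y z t : X,
      x ≠ y → x ≠ z → x ≠ t → y ≠ z → y ≠ t → z ≠ t →
      ρ (f x) (f y) * ρ (f t) (f z) / (ρ (f x) (f z) * ρ (f t) (f y)) ≤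
        η (d x y * d t z / (d x z * d t y)))
    (himp : ∀ t₁ t₂ : ℝ≥0, 0 < t₁ → 0 < t₂ →
      1 ≤ Φ t₁ t₂ → 1 ≤ Φ (1 / η t₁⁻¹) (1 / η t₂⁻¹)) :
    ∀ x y z t : Y, ρ x z * ρ t y ≤ Φ (ρ x y * ρ t z) (ρ x t * ρ y z) := by
  intro x y z t
  obtain ⟨x, rfl⟩ := hf.2 x
  obtain ⟨y, rfl⟩ := hf.2 y
  obtain ⟨z, rfl⟩ := hf.2 z
  obtain ⟨t, rfl⟩ := hf.2 t
  have hρpos : ∀ a b : X, a ≠ b → 0 < ρ (f a) (f b) := by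
    intro a b hab
    rcases eq_or_lt_of_le (zero_le : 0 ≤ ρ (f a) (f b)) with h | h
    · exact absurd (hf.1 ((hρ0 _ _).1 h.symm)) hab
    · exact h
  have hdpos : ∀ a b : X, a ≠ b → 0 < d a b := by
    intro a b hab
    rcases eq_or_lt_of_le (zero_le : 0 ≤ d a b) with h | h
    · exact absurd ((hd0 _ _).1 h.symm) hab
    · exact h
  by_cases hxz : x = z
  · subst hxz
    simp [(hρ0 (f x) (f x)).2 rfl]
  by_cases hty : t = y
  · subst hty
    simp [(hρ0 (f t) (f t)).2 rfl]
  by_cases hxy : x = y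
  · subst hxy
    rw [(hρ0 (f x) (f x)).2 rfl, zero_mul]
    have e : ρ (f x) (f t) * ρ (f x) (f z) = ρ (f x) (f z) * ρ (f t) (f x) := by
      rw [hρs (f x) (f t)]; ring
    rw [e]
    exact ha _ (mul_pos (hρpos _ _ hxz) (hρpos _ _ hty))
  by_cases hzt : z = t
  · subst hzt
    rw [(hρ0 (f z) (f z)).2 rfl, mul_zero]
    have e : ρ (f x) (f z) * ρ (f z) (f y) = ρ (f x) (f z) * ρ (f y) (f z) := by
      rw [hρs (f z) (f y)]
    rw [e]
    exact ha _ (mul_pos (hρpos _ _ hxz) (hρpos _ _ (fun h => hty h.symm)))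
  by_cases hxt : x = t
  · subst hxt
    rw [(hρ0 (f x) (f x)).2 rfl, zero_mul, hΦsymm]
    have e : ρ (f x) (f z) * ρ (f x) (f y) = ρ (f x) (f y) * ρ (f x) (f z) := mul_comm _ _
    rw [e]
    exact ha _ (mul_pos (hρpos _ _ (fun h => hxy h)) (hρpos _ _ hxz))
  by_cases hyz : y = z
  · subst hyz
    rw [(hρ0 (f y) (f y)).2 rfl, mul_zero, hΦsymm]
    exact ha _ (mul_pos (hρpos _ _ hxy) (hρpos _ _ hty))
  -- main case: all distinct
  set A := d x z * d t y with hA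
  set U := d x y * d t z with hU
  set V := d x t * d y z with hV
  have hApos : 0 < A := mul_pos (hdpos _ _ hxz) (hdpos _ _ hty)
  have hUpos : 0 < U := mul_pos (hdpos _ _ hxy) (hdpos _ _ (fun h => hzt h.symm))
  have hVpos : 0 < V := mul_pos (hdpos _ _ hxt) (hdpos _ _ hyz)
  have h1 : (1:ℝ≥0) ≤ Φ (U/A) (V/A) := by
    calc (1:ℝ≥0) = A⁻¹ * A := (inv_mul_cancel₀ hApos.ne').symm
      _ ≤ A⁻¹ * Φ U V := mul_le_mul_right (hX x y z t) _
      _ = Φ (A⁻¹*U) (A⁻¹*V) := hΦhom A⁻¹ U V (by positivity)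
      _ = Φ (U/A) (V/A) := by rw [inv_mul_eq_div, inv_mul_eq_div]
  have h2 := himp (U/A) (V/A) (div_pos hUpos hApos) (div_pos hVpos hApos) h1
  rw [inv_div, inv_div] at h2
  set α := ρ (f x) (f z) * ρ (f t) (f y) with hα
  set β := ρ (f x) (f y) * ρ (f t) (f z) with hβ
  set γ := ρ (f x) (f t) * ρ (f y) (f z) with hγ
  have hαpos : 0 < α := mul_pos (hρpos _ _ hxz) (hρpos _ _ hty)
  have hβpos : 0 < β := mul_pos (hρpos _ _ hxy) (hρpos _ _ (fun h => hzt h.symm))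
  have hγpos : 0 < γ := mul_pos (hρpos _ _ hxt) (hρpos _ _ hyz)
  have hqm1 : α / β ≤ η (A / U) :=
    hqm x z y t hxz hxy hxt (fun h => hyz h.symm) hzt (fun h => hty h.symm)
  have hqm2 : α / γ ≤ η (A / V) := by
    have h := hqm x z t y hxz hxt hxy hzt (fun h => hyz h.symm) hty
    rw [hρs (f y) (f t), hds y t] at h
    exact h
  have key : ∀ c b : ℝ≥0, 0 < b → α / b ≤ c → 1 / c ≤ b / α := by
    intro c b hb h
    have hc : 0 < c := lt_of_lt_of_le (div_pos hαpos hb) h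
    rw [div_le_div_iff₀ hc hαpos, one_mul]
    rw [div_le_iff₀ hb] at h
    calc α ≤ c * b := h
      _ = b * c := mul_comm _ _
  have m1 : 1 / η (A/U) ≤ β / α := key _ _ hβpos hqm1
  have m2 : 1 / η (A/V) ≤ γ / α := key _ _ hγpos hqm2
  have h3 : 1 ≤ Φ (β/α) (γ/α) := le_trans h2 (hΦmono _ _ _ _ m1 m2)
  calc α = α * 1 := (mul_one α).symm
    _ ≤ α * Φ (β/α) (γ/α) := mul_le_mul_right h3 _
    _ = Φ (α * (β/α)) (α * (γ/α)) := hΦhom α _ _ hαpos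
    _ = Φ β γ := by
        rw [mul_comm α (β/α), mul_comm α (γ/α), div_mul_cancel₀ _ hαpos.ne',
          div_mul_cancel₀ _ hαpos.ne']
end

section
/- Let (X,d) be a Ptolemaic semimetric space, (Y,ρ) a semimetric space, and f : X → Y a bijective η-quasimöbius mapping. If for all t₁,t₂ > 0, 1 ≤ t₁ + t₂ implies 1 ≤ 1/η(t₁⁻¹) + 1/η(t₂⁻¹), then (Y,ρ) is Ptolemaic. -/
open NNReal

theorem quasimobius_preserves_ptolemaic
    {X Y : Type*} (d : X → X → ℝ≥0) (ρ : Y → Y → ℝ≥0)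
    (hd0 : ∀ x y, d x y = 0 ↔ x = y) (hds : ∀ x y, d x y = d y x)
    (hρ0 : ∀ x y, ρ x y = 0 ↔ x = y) (hρs : ∀ x y, ρ x y = ρ y x)
    (hX : ∀ x y z t : X, d x z * d t y ≤ d x y * d t z + d x t * d y z)
    (f : X → Y) (hf : Function.Bijective f)
    (η : ℝ≥0 → ℝ≥0) (hη : IsHomeomorph η)
    (hqm : ∀ x y z t : X,
      x ≠ y → x ≠ z → x ≠ t → y ≠ z → y ≠ t → z ≠ t →
      ρ (f x) (f y) * ρ (f t) (f z) / (ρ (f x) (f z) * ρ (f t) (f y)) ≤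
        η (d x y * d t z / (d x z * d t y)))
    (himp : ∀ t₁ t₂ : ℝ≥0, 0 < t₁ → 0 < t₂ →
      1 ≤ t₁ + t₂ → 1 ≤ 1 / η t₁⁻¹ + 1 / η t₂⁻¹) :
    ∀ x y z t : Y, ρ x z * ρ t y ≤ ρ x y * ρ t z + ρ x t * ρ y z := by
  intro x y z t
  by_cases hxy : x = y
  · subst hxy
    rw [(hρ0 x x).mpr rfl, zero_mul, zero_add, hρs t x, mul_comm]
  by_cases hxz : x = z
  · subst hxz
    rw [(hρ0 x x).mpr rfl, zero_mul]
    exact zero_le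
  by_cases hxt : x = t
  · subst hxt
    rw [(hρ0 x x).mpr rfl, zero_mul, add_zero, mul_comm]
  by_cases hyz : y = z
  · subst hyz
    exact le_self_add
  by_cases hyt : y = t
  · subst hyt
    rw [(hρ0 y y).mpr rfl, mul_zero]
    exact zero_le
  by_cases hzt : z = t
  · subst hzt
    rw [(hρ0 z z).mpr rfl, mul_zero, zero_add, hρs z y]
  -- main case: all four points distinct
  have hρpos : ∀ u v : Y, u ≠ v → ρ u v ≠ 0 := fun u v h h0 => h ((hρ0 u v).mp h0)
  have hdpos : ∀ u v : X, u ≠ v → d u v ≠ 0 := fun u v h h0 => h ((hd0 u v).mp h0)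
  obtain ⟨a, ha⟩ := hf.2 x
  obtain ⟨b, hb⟩ := hf.2 y
  obtain ⟨c, hc⟩ := hf.2 z
  obtain ⟨s, hs⟩ := hf.2 t
  subst ha hb hc hs
  have hab : a ≠ b := fun h => hxy (by rw [h])
  have hac : a ≠ c := fun h => hxz (by rw [h])
  have has : a ≠ s := fun h => hxt (by rw [h])
  have hbc : b ≠ c := fun h => hyz (by rw [h])
  have hbs : b ≠ s := fun h => hyt (by rw [h])
  have hcs : c ≠ s := fun h => hzt (by rw [h])
  set A := ρ (f a) (f b) * ρ (f s) (f c) with hA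
  set B := ρ (f a) (f s) * ρ (f b) (f c) with hB
  set C := ρ (f a) (f c) * ρ (f s) (f b) with hC
  have hApos : A ≠ 0 := mul_ne_zero (hρpos _ _ hxy) (hρpos _ _ (Ne.symm hzt))
  have hBpos : B ≠ 0 := mul_ne_zero (hρpos _ _ hxt) (hρpos _ _ hyz)
  have hCpos : C ≠ 0 := mul_ne_zero (hρpos _ _ hxz) (hρpos _ _ (Ne.symm hyt))
  set D := d a c * d s b with hD
  set N₁ := d a b * d s c with hN₁
  set N₂ := d a s * d b c with hN₂
  have hDpos : D ≠ 0 := mul_ne_zero (hdpos _ _ hac) (hdpos _ _ (Ne.symm hbs))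
  have hN₁pos : N₁ ≠ 0 := mul_ne_zero (hdpos _ _ hab) (hdpos _ _ (Ne.symm hcs))
  have hN₂pos : N₂ ≠ 0 := mul_ne_zero (hdpos _ _ has) (hdpos _ _ hbc)
  have h1 : (1 : ℝ≥0) ≤ N₁ / D + N₂ / D := by
    rw [← add_div, le_div_iff₀ (pos_iff_ne_zero.mpr hDpos), one_mul]
    exact hX a b c s
  have h2 := himp (N₁ / D) (N₂ / D) (pos_iff_ne_zero.mpr (div_ne_zero hN₁pos hDpos))
    (pos_iff_ne_zero.mpr (div_ne_zero hN₂pos hDpos)) h1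
  rw [inv_div, inv_div] at h2
  -- quasimöbius bounds
  have hq1 : C / A ≤ η (D / N₁) :=
    hqm a c b s hac hab has (Ne.symm hbc) hcs hbs
  have hq2 : C / B ≤ η (D / N₂) := by
    have := hqm a c s b hac has hab hcs (Ne.symm hbc) (Ne.symm hbs)
    rwa [hρs (f b) (f s), hds b s] at this
  have key : ∀ E : ℝ≥0, E ≠ 0 → ∀ w : ℝ≥0, C / E ≤ w → 1 / w ≤ E / C := by
    intro E hE w hw
    have hwpos : w ≠ 0 := fun h0 => by
      rw [h0, le_zero_iff, div_eq_zero_iff] at hw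
      exact absurd (hw.resolve_right hE) hCpos
    rw [div_le_iff₀ (pos_iff_ne_zero.mpr hE)] at hw
    rw [le_div_iff₀ (pos_iff_ne_zero.mpr hCpos), one_div_mul_eq_div, div_le_iff₀ (pos_iff_ne_zero.mpr hwpos)]
    rwa [mul_comm] at hw
  have h3 : (1 : ℝ≥0) ≤ A / C + B / C :=
    h2.trans (add_le_add (key A hApos _ hq1) (key B hBpos _ hq2))
  rw [← add_div, le_div_iff₀ (pos_iff_ne_zero.mpr hCpos), one_mul] at h3
  exact h3
end

section
/- Let X be a Ptolemaic semimetric space, Y a semimetric space, and f : X → Y a bijective η-quasimöbius mapping with η(t) = t^α, 0 < α ≤ 1. Then Y is Ptolemaic. -/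
open NNReal

private lemma nnreal_rpow_bound {C A C' A' : ℝ≥0} (hA' : A' ≠ 0) (hC' : C' ≠ 0)
    {α : ℝ} (h : C / A ≤ (C' / A') ^ α) (hA : A ≠ 0) :
    C * (A' / C') ^ α ≤ A := by
  have hC : C ≤ (C' / A') ^ α * A := (div_le_iff₀ (pos_iff_ne_zero.2 hA)).mp h
  calc C * (A' / C') ^ α ≤ (C' / A') ^ α * A * (A' / C') ^ α :=
        mul_le_mul_left hC _
    _ = ((C' / A') * (A' / C')) ^ α * A := by
        rw [NNReal.mul_rpow]; ring
    _ = A := by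
        rw [div_mul_div_comm, mul_comm C' A', div_self (by positivity), NNReal.one_rpow, one_mul]

private lemma nnreal_rpow_sum_ge_one {u v : ℝ≥0} {α : ℝ} (hα0 : 0 < α) (hα1 : α ≤ 1)
    (huv : 1 ≤ u + v) : 1 ≤ u ^ α + v ^ α := by
  by_cases hu : 1 ≤ u
  · calc (1 : ℝ≥0) = 1 ^ α := (NNReal.one_rpow α).symm
      _ ≤ u ^ α := NNReal.rpow_le_rpow hu hα0.le
      _ ≤ u ^ α + v ^ α := le_self_add
  by_cases hv : 1 ≤ v
  · calc (1 : ℝ≥0) = 1 ^ α := (NNReal.one_rpow α).symm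
      _ ≤ v ^ α := NNReal.rpow_le_rpow hv hα0.le
      _ ≤ u ^ α + v ^ α := le_add_self
  push_neg at hu hv
  rcases eq_or_lt_of_le (show (0:ℝ≥0) ≤ u from zero_le) with hu0 | hu0
  · exact absurd (by simpa [← hu0] using huv) (not_le.mpr hv)
  rcases eq_or_lt_of_le (show (0:ℝ≥0) ≤ v from zero_le) with hv0 | hv0
  · exact absurd (by simpa [← hv0] using huv) (not_le.mpr hu)
  have h1 : u ≤ u ^ α := by
    calc u = u ^ (1 : ℝ) := (NNReal.rpow_one u).symm
      _ ≤ u ^ α := NNReal.rpow_le_rpow_of_exponent_ge hu0 hu.le hα1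
  have h2 : v ≤ v ^ α := by
    calc v = v ^ (1 : ℝ) := (NNReal.rpow_one v).symm
      _ ≤ v ^ α := NNReal.rpow_le_rpow_of_exponent_ge hv0 hv.le hα1
  exact huv.trans (add_le_add h1 h2)

theorem quasimobius_power_preserves_ptolemaic
    {X Y : Type*} (d : X → X → ℝ≥0) (ρ : Y → Y → ℝ≥0)
    (hd0 : ∀ x y, d x y = 0 ↔ x = y) (hds : ∀ x y, d x y = d y x)
    (hρ0 : ∀ x y, ρ x y = 0 ↔ x = y) (hρs : ∀ x y, ρ x y = ρ y x)
    (hX : ∀ x y z t : X, d x z * d t y ≤ d x y * d t z + d x t * d y z)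
    (f : X → Y) (hf : Function.Bijective f)
    (α : ℝ) (hα0 : 0 < α) (hα1 : α ≤ 1)
    (hqm : ∀ x y z t : X,
      x ≠ y → x ≠ z → x ≠ t → y ≠ z → y ≠ t → z ≠ t →
      ρ (f x) (f y) * ρ (f t) (f z) / (ρ (f x) (f z) * ρ (f t) (f y)) ≤
        (d x y * d t z / (d x z * d t y)) ^ α) :
    ∀ x y z t : Y, ρ x z * ρ t y ≤ ρ x y * ρ t z + ρ x t * ρ y z := by
  intro x y z t
  obtain ⟨a, rfl⟩ := hf.2 x
  obtain ⟨b, rfl⟩ := hf.2 y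
  obtain ⟨c, rfl⟩ := hf.2 z
  obtain ⟨s, rfl⟩ := hf.2 t
  by_cases hac : a = c
  · subst hac; rw [(hρ0 _ _).2 rfl, zero_mul]; exact zero_le
  by_cases hbs : b = s
  · subst hbs; rw [(hρ0 (f b) (f b)).2 rfl, mul_zero]; exact zero_le
  by_cases hab : a = b
  · subst hab
    rw [(hρ0 (f a) (f a)).2 rfl, zero_mul, zero_add, hρs (f a) (f s),
      mul_comm (ρ (f s) (f a)) (ρ (f a) (f c)), mul_comm (ρ (f a) (f c)) (ρ (f s) (f a))]
  by_cases has : a = s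
  · subst has
    rw [(hρ0 (f a) (f a)).2 rfl, zero_mul, add_zero, mul_comm]
  by_cases hbc : b = c
  · subst hbc
    rw [(hρ0 (f b) (f b)).2 rfl, mul_zero, add_zero, hρs (f s) (f b)]
  by_cases hcs : c = s
  · subst hcs
    rw [(hρ0 (f c) (f c)).2 rfl, mul_zero, zero_add, hρs (f b) (f c),
      mul_comm (ρ (f a) (f c)) (ρ (f c) (f b))]
  -- all distinct
  have hne : ∀ p q : X, p ≠ q → ρ (f p) (f q) ≠ 0 := fun p q h hh =>
    h (hf.1 ((hρ0 _ _).1 hh))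
  have hdne : ∀ p q : X, p ≠ q → d p q ≠ 0 := fun p q h hh => h ((hd0 _ _).1 hh)
  set A : ℝ≥0 := ρ (f a) (f b) * ρ (f s) (f c) with hA
  set B : ℝ≥0 := ρ (f a) (f s) * ρ (f b) (f c) with hB
  set C : ℝ≥0 := ρ (f a) (f c) * ρ (f s) (f b) with hC
  set A' : ℝ≥0 := d a b * d s c with hA'
  set B' : ℝ≥0 := d a s * d b c with hB'
  set C' : ℝ≥0 := d a c * d s b with hC'
  have hAne : A ≠ 0 := mul_ne_zero (hne _ _ hab) (hne _ _ (Ne.symm hcs))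
  have hBne : B ≠ 0 := mul_ne_zero (hne _ _ has) (hne _ _ hbc)
  have hA'ne : A' ≠ 0 := mul_ne_zero (hdne _ _ hab) (hdne _ _ (Ne.symm hcs))
  have hB'ne : B' ≠ 0 := mul_ne_zero (hdne _ _ has) (hdne _ _ hbc)
  have hC'ne : C' ≠ 0 := mul_ne_zero (hdne _ _ hac) (hdne _ _ (Ne.symm hbs))
  have h1 : C / A ≤ (C' / A') ^ α := by
    have := hqm a c b s hac hab has (Ne.symm hbc) hcs hbs
    simpa [hC, hA, hC', hA'] using this
  have h2 : C / B ≤ (C' / B') ^ α := by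
    have := hqm a c s b hac has hab hcs (Ne.symm hbc) (Ne.symm hbs)
    rw [hρs (f b) (f s), hds b s] at this
    simpa [hC, hB, hC', hB', mul_comm] using this
  have hA1 : C * (A' / C') ^ α ≤ A := nnreal_rpow_bound hA'ne hC'ne h1 hAne
  have hB1 : C * (B' / C') ^ α ≤ B := nnreal_rpow_bound hB'ne hC'ne h2 hBne
  have hsum : (1 : ℝ≥0) ≤ A' / C' + B' / C' := by
    rw [← add_div, le_div_iff₀ (pos_iff_ne_zero.2 hC'ne), one_mul]
    exact hX a b c s
  have key : (1 : ℝ≥0) ≤ (A' / C') ^ α + (B' / C') ^ α :=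
    nnreal_rpow_sum_ge_one hα0 hα1 hsum
  calc C = C * 1 := (mul_one C).symm
    _ ≤ C * ((A' / C') ^ α + (B' / C') ^ α) := mul_le_mul_right key C
    _ = C * (A' / C') ^ α + C * (B' / C') ^ α := mul_add C _ _
    _ ≤ A + B := add_le_add hA1 hB1
end
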